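/- Let n > k > 0 be integers and let F be a pointwise-increasing family of k-element subsets of [n]. Then U_A(F) = {x ∈ [n] : Bob(F_x^+)} is an upper interval of [n] (i.e., if x ∈ U_A(F) and x ≤ y ≤ n then y ∈ U_A(F)), and L_A(F) = {x ∈ [n] : Bob(F_x^-)} is a lower interval of [n] (i.e., if x ∈ L_A(F) and 1 ≤ y ≤ x then y ∈ L_A(F)). -/

import Mathlib

/-- The board `[n] = {1, …, n}` as a finite set of natural numbers. -/
def board (n : ℕ) : Finset ℕ := Finset.Icc 1 n

/-- The order-preserving relabelling of `[n] \ {x}` onto `[n-1]`: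
elements below `x` are unchanged, elements above `x` drop by one. -/
def stdElt (x r : ℕ) : ℕ := if r < x then r else r - 1

/-- Standardise a set avoiding `x`: relabel it via `stdElt x`. -/
def stdSet (x : ℕ) (S : Finset ℕ) : Finset ℕ := S.image (stdElt x)

/-- The standardised section `F_x^+ = { S \ {x} : x ∈ S ∈ F }`,
viewed as a family of subsets of `[n-1]`. -/
def secPlus (F : Set (Finset ℕ)) (x : ℕ) : Set (Finset ℕ) :=
  {T | ∃ S ∈ F, x ∈ S ∧ T = stdSet x (S.erase x)}

/-- The standardised section `F_x^- = { S ∈ F : x ∉ S }`,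
viewed as a family of subsets of `[n-1]`. -/
def secMinus (F : Set (Finset ℕ)) (x : ℕ) : Set (Finset ℕ) :=
  {T | ∃ S ∈ F, x ∉ S ∧ T = stdSet x S}

mutual
  /-- `AliceWins n k F`: Alice wins her `F`-game, where `F` is a family of
  `k`-subsets of `[n]`.  Terminal games (`k = 0` or `k = n`) are won iff `F`
  is nonempty; otherwise Alice needs a first offer `x` such that Bob wins both
  his `F_x^+`-game and his `F_x^-`-game. -/
  def AliceWins (n k : ℕ) (F : Set (Finset ℕ)) : Prop :=
    if h : k = 0 ∨ n ≤ k then F.Nonempty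
    else ∃ x ∈ board n,
      BobWins (n - 1) (k - 1) (secPlus F x) ∧ BobWins (n - 1) k (secMinus F x)
  termination_by n
  decreasing_by all_goals omega

  /-- `BobWins n k F`: Bob wins his `F`-game, where `F` is a family of
  `k`-subsets of `[n]`.  Terminal games (`k = 0` or `k = n`) are won iff `F`
  is nonempty; otherwise Bob needs, for every first offer `x`, that Alice wins
  her `F_x^+`-game or her `F_x^-`-game. -/
  def BobWins (n k : ℕ) (F : Set (Finset ℕ)) : Prop :=
    if h : k = 0 ∨ n ≤ k then F.Nonempty
    else ∀ x ∈ board n,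
      AliceWins (n - 1) (k - 1) (secPlus F x) ∨ AliceWins (n - 1) k (secMinus F x)
  termination_by n
  decreasing_by all_goals omega
end

/-- `S ⪯ T` in the pointwise order: the increasing enumerations of `S` and `T`
have the same length and are pointwise `≤`. -/
def PointwiseLE (S T : Finset ℕ) : Prop :=
  List.Forall₂ (· ≤ ·) (S.sort (· ≤ ·)) (T.sort (· ≤ ·))

/-- `F` consists of `k`-element subsets of `[n]`. -/
def IsFamilyOn (n k : ℕ) (F : Set (Finset ℕ)) : Prop :=
  ∀ S ∈ F, S ⊆ board n ∧ S.card = k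

/-- `F` is pointwise-increasing as a family of `k`-subsets of `[n]`:
it is upwards closed in the pointwise order. -/
def IsIncreasingFamily (n k : ℕ) (F : Set (Finset ℕ)) : Prop :=
  ∀ S T : Finset ℕ, S ∈ F → T ⊆ board n → T.card = k → PointwiseLE S T → T ∈ F

lemma list_le_of_counts (l m : List ℕ) (hl : l.Pairwise (· < ·)) (hm : m.Pairwise (· < ·))
    (hlen : l.length = m.length)
    (h : ∀ a : ℕ, (l.filter (fun b => a ≤ b)).length ≤ (m.filter (fun b => a ≤ b)).length) :
    List.Forall₂ (· ≤ ·) l m := by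
  rw [List.forall₂_iff_get]
  refine ⟨hlen, ?_⟩
  intro i h1 h2
  by_contra hc
  push_neg at hc
  set a := l.get ⟨i, h1⟩ with ha
  -- Claim 1
  have c1 : l.length - i ≤ (l.filter (fun b => a ≤ b)).length := by
    have hsub : (l.drop i).filter (fun b => a ≤ b) = l.drop i := by
      rw [List.filter_eq_self]
      intro b hb
      obtain ⟨j, hj, rfl⟩ := List.mem_iff_getElem.1 hb
      rw [List.length_drop] at hj
      rw [List.getElem_drop]
      rcases Nat.eq_zero_or_pos j with rfl | hj0
      · simp [ha, List.get_eq_getElem]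
      · have := hl.rel_get_of_lt (a := ⟨i, h1⟩)
          (b := ⟨i + j, by simpa using (by omega : i + j < l.length)⟩) (by simp; omega)
        simpa [ha, List.get_eq_getElem] using this.le
    have hsl : ((l.drop i).filter (fun b => a ≤ b)).length ≤ (l.filter (fun b => a ≤ b)).length :=
      ((l.drop_sublist i).filter _).length_le
    rw [hsub] at hsl
    simpa using hsl
  -- Claim 2
  have c2 : (m.filter (fun b => a ≤ b)).length ≤ m.length - (i + 1) := by
    have hsplit : m = m.take (i + 1) ++ m.drop (i + 1) := (m.take_append_drop (i + 1)).symm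
    have htake : (m.take (i + 1)).filter (fun b => a ≤ b) = [] := by
      rw [List.filter_eq_nil_iff]
      intro b hb
      obtain ⟨j, hj, rfl⟩ := List.mem_iff_getElem.1 hb
      have hj' : j < i + 1 := by simpa using lt_of_lt_of_le hj (List.length_take_le _ _)
      have hle : (m.take (i+1))[j] ≤ m.get ⟨i, h2⟩ := by
        rw [List.getElem_take]
        rcases Nat.lt_or_ge j i with hji | hji
        · exact (hm.rel_get_of_lt (a := ⟨j, by omega⟩) (b := ⟨i, h2⟩) (by simpa using hji)).le
        · have : j = i := by omega
          subst this; simp [List.get_eq_getElem]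
      simp only [decide_eq_true_eq]
      omega
    conv_lhs => rw [hsplit]
    rw [List.filter_append, htake, List.nil_append]
    calc ((m.drop (i+1)).filter _).length ≤ (m.drop (i+1)).length := (m.drop (i+1)).length_filter_le _
    _ = m.length - (i + 1) := by simp
  have := h a
  omega

lemma card_filter_sort (S : Finset ℕ) (p : ℕ → Prop) [DecidablePred p] :
    (S.filter p).card = ((S.sort (· ≤ ·)).filter (fun b => p b)).length := by
  have h1 : ((S.sort (· ≤ ·) : List ℕ) : Multiset ℕ) = S.val := Finset.sort_eq S _
  calc (S.filter p).card = Multiset.card (S.val.filter p) := rfl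
    _ = Multiset.card ((((S.sort (· ≤ ·) : List ℕ) : Multiset ℕ)).filter p) := by rw [h1]
    _ = _ := by rw [Multiset.filter_coe, Multiset.coe_card]


lemma pointwiseLE_of_counts (S T : Finset ℕ) (hc : S.card = T.card)
    (h : ∀ a : ℕ, (S.filter (fun b => a ≤ b)).card ≤ (T.filter (fun b => a ≤ b)).card) :
    PointwiseLE S T := by
  apply list_le_of_counts _ _ (S.sortedLT_sort.pairwise) (T.sortedLT_sort.pairwise)
  · simpa using hc
  · intro a
    have := h a
    rwa [card_filter_sort S, card_filter_sort T] at this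

lemma secPlus_mono {F G : Set (Finset ℕ)} (h : F ⊆ G) (x : ℕ) : secPlus F x ⊆ secPlus G x := by
  rintro T ⟨S, hS, hx, rfl⟩; exact ⟨S, h hS, hx, rfl⟩
lemma secMinus_mono {F G : Set (Finset ℕ)} (h : F ⊆ G) (x : ℕ) : secMinus F x ⊆ secMinus G x := by
  rintro T ⟨S, hS, hx, rfl⟩; exact ⟨S, h hS, hx, rfl⟩

lemma winsMono : ∀ n k : ℕ, ∀ F G : Set (Finset ℕ), F ⊆ G →
    (AliceWins n k F → AliceWins n k G) ∧ (BobWins n k F → BobWins n k G) := by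
  intro n
  induction n using Nat.strong_induction_on with
  | _ n ih =>
    intro k F G hFG
    constructor
    · intro hA
      rw [AliceWins] at hA ⊢
      split_ifs at hA ⊢ with h
      · exact hA.mono hFG
      · obtain ⟨x, hx, hb1, hb2⟩ := hA
        have hn : n - 1 < n := by omega
        exact ⟨x, hx, (ih _ hn _ _ _ (secPlus_mono hFG x)).2 hb1,
          (ih _ hn _ _ _ (secMinus_mono hFG x)).2 hb2⟩
    · intro hB
      rw [BobWins] at hB ⊢
      split_ifs at hB ⊢ with h
      · exact hB.mono hFG
      · intro x hx
        have hn : n - 1 < n := by omega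
        rcases hB x hx with h1 | h1
        · exact Or.inl ((ih _ hn _ _ _ (secPlus_mono hFG x)).1 h1)
        · exact Or.inr ((ih _ hn _ _ _ (secMinus_mono hFG x)).1 h1)

lemma secMinus_subset {n k : ℕ} {F : Set (Finset ℕ)} (hF : IsFamilyOn n k F)
    (hinc : IsIncreasingFamily n k F) {x y : ℕ} (hx : x ∈ board n) (hy : y ∈ board n)
    (hyx : y ≤ x) : secMinus F x ⊆ secMinus F y := by
  rintro T ⟨S, hS, hxS, rfl⟩
  obtain ⟨hSb, hScard⟩ := hF S hS
  simp only [board, Finset.mem_Icc] at hx hy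
  set f : ℕ → ℕ := fun r => if y ≤ r ∧ r < x then r + 1 else r with hf
  have hne : ∀ r ∈ S, r ≠ x := fun r hr h => hxS (h ▸ hr)
  have hinj : Set.InjOn f S := by
    intro r1 h1 r2 h2 h12
    have e1 := hne r1 h1; have e2 := hne r2 h2
    simp only [hf] at h12; split_ifs at h12 <;> omega
  have hScard' : (S.image f).card = k := by rw [Finset.card_image_of_injOn hinj, hScard]
  have hSb' : S.image f ⊆ board n := by
    intro r hr
    obtain ⟨s, hs, rfl⟩ := Finset.mem_image.1 hr
    have := hSb hs
    simp only [board, Finset.mem_Icc] at this ⊢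
    simp only [hf]; split_ifs <;> omega
  have hyS' : y ∉ S.image f := by
    intro hmem
    obtain ⟨s, hs, hsy⟩ := Finset.mem_image.1 hmem
    have := hne s hs
    simp only [hf] at hsy; split_ifs at hsy <;> omega
  have hstd : stdSet y (S.image f) = stdSet x S := by
    unfold stdSet
    rw [Finset.image_image]
    apply Finset.image_congr
    intro r hr
    have := hne r hr
    simp only [Function.comp, hf, stdElt]
    split_ifs <;> omega
  have hple : PointwiseLE S (S.image f) := by
    apply pointwiseLE_of_counts _ _ (by rw [hScard', hScard])
    intro a
    apply Finset.card_le_card_of_injOn f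
    · intro r hr
      simp only [Finset.mem_coe, Finset.mem_filter] at hr ⊢
      refine ⟨Finset.mem_image_of_mem f hr.1, ?_⟩
      have := hr.2
      simp only [hf]; split_ifs <;> omega
    · exact hinj.mono (fun r hr => (Finset.mem_filter.1 hr).1)
  exact ⟨S.image f, hinc S _ hS hSb' hScard' hple, hyS', hstd.symm⟩

lemma secPlus_subset {n k : ℕ} {F : Set (Finset ℕ)} (hF : IsFamilyOn n k F)
    (hinc : IsIncreasingFamily n k F) {x y : ℕ} (hx : x ∈ board n) (hy : y ∈ board n)
    (hxy : x ≤ y) : secPlus F x ⊆ secPlus F y := by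
  rintro T ⟨S, hS, hxS, rfl⟩
  obtain ⟨hSb, hScard⟩ := hF S hS
  simp only [board, Finset.mem_Icc] at hx hy
  have hbd : ∀ r ∈ S, 1 ≤ r ∧ r ≤ n := by
    intro r hr; have := hSb hr; simpa [board, Finset.mem_Icc] using this
  set f : ℕ → ℕ := fun r => if r ≤ y then stdElt x r else r with hf
  set M : Finset ℕ := S.erase x with hM
  have hMne : ∀ r ∈ M, r ≠ x := fun r hr => Finset.ne_of_mem_erase hr
  have hMS : ∀ r ∈ M, r ∈ S := fun r hr => Finset.mem_of_mem_erase hr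
  have hinj : Set.InjOn f M := by
    intro r1 h1 r2 h2 h12
    have e1 := hMne r1 h1; have e2 := hMne r2 h2
    have b1 := hbd r1 (hMS r1 h1); have b2 := hbd r2 (hMS r2 h2)
    simp only [hf, stdElt] at h12; split_ifs at h12 <;> omega
  have hyM : y ∉ M.image f := by
    intro hmem
    obtain ⟨s, hs, hsy⟩ := Finset.mem_image.1 hmem
    have := hMne s hs; have := hbd s (hMS s hs)
    simp only [hf, stdElt] at hsy; split_ifs at hsy <;> omega
  set S' : Finset ℕ := insert y (M.image f) with hS'
  have hcard' : S'.card = k := by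
    rw [hS', Finset.card_insert_of_notMem hyM, Finset.card_image_of_injOn hinj, hM,
      Finset.card_erase_of_mem hxS, hScard]
    have : 1 ≤ k := by
      rw [← hScard]; exact Finset.card_pos.2 ⟨x, hxS⟩
    omega
  have hSb' : S' ⊆ board n := by
    intro r hr
    rw [hS', Finset.mem_insert] at hr
    simp only [board, Finset.mem_Icc]
    rcases hr with rfl | hr
    · omega
    · obtain ⟨s, hs, rfl⟩ := Finset.mem_image.1 hr
      have := hbd s (hMS s hs); have := hMne s hs
      simp only [hf, stdElt]; split_ifs <;> omega
  have hstd : stdSet y (S'.erase y) = stdSet x M := by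
    rw [hS', Finset.erase_insert hyM]
    unfold stdSet
    rw [Finset.image_image]
    apply Finset.image_congr
    intro r hr
    have := hMne r hr; have := hbd r (hMS r hr)
    simp only [Function.comp, hf, stdElt]
    split_ifs <;> omega
  have hple : PointwiseLE S S' := by
    apply pointwiseLE_of_counts _ _ (by rw [hcard', hScard])
    intro a
    rcases le_or_gt a x with hax | hax
    · -- injection: update f x y
      apply Finset.card_le_card_of_injOn (Function.update f x y)
      · intro r hr
        simp only [Finset.mem_coe, Finset.mem_filter] at hr ⊢
        obtain ⟨hrS, hra⟩ := hr
        by_cases hrx : r = x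
        · subst hrx
          rw [Function.update_self]
          exact ⟨Finset.mem_insert_self _ _, by omega⟩
        · rw [Function.update_of_ne hrx]
          have hrM : r ∈ M := Finset.mem_erase.2 ⟨hrx, hrS⟩
          have := hbd r hrS
          refine ⟨Finset.mem_insert_of_mem (Finset.mem_image_of_mem f hrM), ?_⟩
          simp only [hf, stdElt]; split_ifs <;> omega
      · intro r1 h1 r2 h2 h12
        simp only [Finset.coe_filter, Set.mem_setOf_eq] at h1 h2
        by_cases e1 : r1 = x <;> by_cases e2 : r2 = x
        · omega
        · rw [e1, Function.update_self, Function.update_of_ne e2] at h12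
          exact absurd (h12.symm ▸ Finset.mem_image_of_mem f
            (Finset.mem_erase.2 ⟨e2, h2.1⟩)) hyM
        · rw [e2, Function.update_self, Function.update_of_ne e1] at h12
          exact absurd (h12 ▸ Finset.mem_image_of_mem f
            (Finset.mem_erase.2 ⟨e1, h1.1⟩)) hyM
        · rw [Function.update_of_ne e1, Function.update_of_ne e2] at h12
          exact hinj (Finset.mem_erase.2 ⟨e1, h1.1⟩) (Finset.mem_erase.2 ⟨e2, h2.1⟩) h12
    · rcases le_or_gt a y with hay | hay
      · -- injection: update f a y
        apply Finset.card_le_card_of_injOn (Function.update f a y)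
        · intro r hr
          simp only [Finset.mem_coe, Finset.mem_filter] at hr ⊢
          obtain ⟨hrS, hra⟩ := hr
          have hrx : r ≠ x := by omega
          have hrM : r ∈ M := Finset.mem_erase.2 ⟨hrx, hrS⟩
          have := hbd r hrS
          by_cases hraeq : r = a
          · subst hraeq
            rw [Function.update_self]
            exact ⟨Finset.mem_insert_self _ _, by omega⟩
          · rw [Function.update_of_ne hraeq]
            refine ⟨Finset.mem_insert_of_mem (Finset.mem_image_of_mem f hrM), ?_⟩
            simp only [hf, stdElt]; split_ifs <;> omega
        · intro r1 h1 r2 h2 h12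
          simp only [Finset.coe_filter, Set.mem_setOf_eq] at h1 h2
          have m1 : r1 ∈ M := Finset.mem_erase.2 ⟨by omega, h1.1⟩
          have m2 : r2 ∈ M := Finset.mem_erase.2 ⟨by omega, h2.1⟩
          by_cases e1 : r1 = a <;> by_cases e2 : r2 = a
          · omega
          · rw [e1, Function.update_self, Function.update_of_ne e2] at h12
            exact absurd (h12.symm ▸ Finset.mem_image_of_mem f m2) hyM
          · rw [e2, Function.update_self, Function.update_of_ne e1] at h12
            exact absurd (h12 ▸ Finset.mem_image_of_mem f m1) hyM
          · rw [Function.update_of_ne e1, Function.update_of_ne e2] at h12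
            exact hinj m1 m2 h12
      · -- subset
        apply Finset.card_le_card
        intro r hr
        simp only [Finset.mem_filter] at hr ⊢
        obtain ⟨hrS, hra⟩ := hr
        have hrx : r ≠ x := by omega
        have hrM : r ∈ M := Finset.mem_erase.2 ⟨hrx, hrS⟩
        have hfr : f r = r := by simp only [hf]; rw [if_neg (by omega)]
        exact ⟨Finset.mem_insert_of_mem (hfr ▸ Finset.mem_image_of_mem f hrM), hra⟩
  exact ⟨S', hinc S S' hS hSb' hcard' hple, Finset.mem_insert_self _ _, by
    rw [hstd]⟩


/-- for an increasing family `F`, the set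
`U_A(F) = {x ∈ [n] : Bob(F_x^+)}` is an upper interval of `[n]`, and
`L_A(F) = {x ∈ [n] : Bob(F_x^-)}` is a lower interval of `[n]`. -/
theorem UA_upper_LA_lower (n k : ℕ) (hk : 0 < k) (hkn : k < n)
    (F : Set (Finset ℕ)) (hF : IsFamilyOn n k F)
    (hinc : IsIncreasingFamily n k F) :
    (∀ x y : ℕ, x ∈ board n → y ∈ board n → x ≤ y →
      BobWins (n - 1) (k - 1) (secPlus F x) → BobWins (n - 1) (k - 1) (secPlus F y)) ∧
    (∀ x y : ℕ, x ∈ board n → y ∈ board n → y ≤ x →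
      BobWins (n - 1) k (secMinus F x) → BobWins (n - 1) k (secMinus F y)) := by
  constructor
  · intro x y hx hy hxy hb
    exact (winsMono (n-1) (k-1) _ _ (secPlus_subset hF hinc hx hy hxy)).2 hb
  · intro x y hx hy hyx hb
    exact (winsMono (n-1) k _ _ (secMinus_subset hF hinc hx hy hyx)).2 hb
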